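/- If (M →^∂ N, ·, {−,−}) is a braided crossed module of Lie K-algebras with (M →^∂ N, ·) perfect as a crossed module, then c = (c₁, c₂) : (N ⊗ M →^{Id_N ⊗ ∂} N ⊗ N, *, ⦃−,−⦄) → (M →^∂ N, ·, {−,−}), with c₁(n ⊗ m) = n·m and c₂(n ⊗ n') = [n,n'], is a morphism of braided crossed modules and a compatible central extension. -/

import Mathlib

universe u

/-- The Lie bracket as a bilinear map. -/
def bracketMap (K : Type u) [CommRing K] (M : Type u) [LieRing M] [LieAlgebra K M] :
    M →ₗ[K] M →ₗ[K] M :=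
  LinearMap.mk₂ K (fun a b => ⁅a, b⁆) add_lie smul_lie lie_add lie_smul

/-- Axioms for a crossed module of Lie `K`-algebras `(d : M → N, act)`. -/
structure LieXMod (K : Type u) [CommRing K] (M N : Type u)
    [LieRing M] [LieAlgebra K M] [LieRing N] [LieAlgebra K N]
    (d : M →ₗ⁅K⁆ N) (act : N →ₗ[K] M →ₗ[K] M) : Prop where
  act_lie : ∀ n n' m, act ⁅n, n'⁆ m = act n (act n' m) - act n' (act n m)
  lie_act : ∀ n m m', act n ⁅m, m'⁆ = ⁅act n m, m'⁆ + ⁅m, act n m'⁆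
  equivar : ∀ n m, d (act n m) = ⁅n, d m⁆
  peiffer : ∀ m m', act (d m) m' = ⁅m, m'⁆

/-- Axioms `BLie1`–`BLie6` for a braiding on a crossed module of Lie algebras. -/
structure LieBraiding (K : Type u) [CommRing K] (M N : Type u)
    [LieRing M] [LieAlgebra K M] [LieRing N] [LieAlgebra K N]
    (d : M →ₗ⁅K⁆ N) (act : N →ₗ[K] M →ₗ[K] M)
    (br : N →ₗ[K] N →ₗ[K] M) : Prop where
  b1 : ∀ n n', d (br n n') = ⁅n, n'⁆
  b2 : ∀ m m', br (d m) (d m') = ⁅m, m'⁆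
  b3 : ∀ m n, br (d m) n = - act n m
  b4 : ∀ n m, br n (d m) = act n m
  b5 : ∀ n n' n'', br n ⁅n', n''⁆ = br ⁅n, n'⁆ n'' - br ⁅n, n''⁆ n'
  b6 : ∀ n n' n'', br ⁅n, n'⁆ n'' = br n ⁅n', n''⁆ - br n' ⁅n, n''⁆

/-- `T`, together with the bilinear pairing `t`, is the non-abelian tensor product
of the Lie algebras `A` and `B` acting on each other via `actAB` and `actBA`:
it satisfies the defining relations of the presentation and the universal property. -/
structure IsNATensor (K : Type u) [CommRing K] (A B : Type u)
    [LieRing A] [LieAlgebra K A] [LieRing B] [LieAlgebra K B]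
    (actAB : A →ₗ[K] B →ₗ[K] B) (actBA : B →ₗ[K] A →ₗ[K] A)
    (T : Type u) [LieRing T] [LieAlgebra K T]
    (t : A →ₗ[K] B →ₗ[K] T) : Prop where
  rel3a : ∀ a a' b, t ⁅a, a'⁆ b = t a (actAB a' b) - t a' (actAB a b)
  rel3b : ∀ a b b', t a ⁅b, b'⁆ = t (actBA b' a) b - t (actBA b a) b'
  rel4 : ∀ a b a' b', ⁅t a b, t a' b'⁆ = - t (actBA b a) (actAB a' b')
  lift : ∀ (C : Type u) [LieRing C] [LieAlgebra K C] (f : A →ₗ[K] B →ₗ[K] C),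
      (∀ a a' b, f ⁅a, a'⁆ b = f a (actAB a' b) - f a' (actAB a b)) →
      (∀ a b b', f a ⁅b, b'⁆ = f (actBA b' a) b - f (actBA b a) b') →
      (∀ a b a' b', ⁅f a b, f a' b'⁆ = - f (actBA b a) (actAB a' b')) →
      ∃! φ : T →ₗ⁅K⁆ C, ∀ a b, φ (t a b) = f a b

/-- `T` with pairing `t` is the non-abelian tensor square of `N` (adjoint actions). -/
def IsNATensorSq (K : Type u) [CommRing K] (N : Type u) [LieRing N] [LieAlgebra K N]
    (T : Type u) [LieRing T] [LieAlgebra K T] (t : N →ₗ[K] N →ₗ[K] T) : Prop :=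
  IsNATensor K N N (bracketMap K N) (bracketMap K N) T t

/-- The action `m ⋆ n = ⁅∂ m, n⁆` of `M` on `N` induced by the boundary map. -/
def coAct (K : Type u) [CommRing K] (M N : Type u) [LieRing M] [LieAlgebra K M]
    [LieRing N] [LieAlgebra K N] (d : M →ₗ⁅K⁆ N) : M →ₗ[K] N →ₗ[K] N :=
  LinearMap.mk₂ K (fun m n => ⁅(d m : N), n⁆)
    (fun m m' n => by simp [add_lie]) (fun c m n => by simp [smul_lie])
    (fun m n n' => by simp [lie_add]) (fun c m n => by simp [lie_smul])

section SpanTop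

variable {K : Type u} [CommRing K] {A B : Type u}
    [LieRing A] [LieAlgebra K A] [LieRing B] [LieAlgebra K B]
    {actAB : A →ₗ[K] B →ₗ[K] B} {actBA : B →ₗ[K] A →ₗ[K] A}
    {T : Type u} [LieRing T] [LieAlgebra K T]
    {t : A →ₗ[K] B →ₗ[K] T}

theorem IsNATensor.span_top (h : IsNATensor K A B actAB actBA T t) :
    Submodule.span K {x : T | ∃ a b, x = t a b} = ⊤ := by
  set s : Set T := {x : T | ∃ a b, x = t a b} with hs
  have hlie : ∀ x ∈ Submodule.span K s, ∀ y ∈ Submodule.span K s,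
      ⁅x, y⁆ ∈ Submodule.span K s := by
    intro x hx
    induction hx using Submodule.span_induction with
    | mem x hxs =>
      intro y hy
      induction hy using Submodule.span_induction with
      | mem y hys =>
        obtain ⟨a, b, rfl⟩ := hxs; obtain ⟨a', b', rfl⟩ := hys
        rw [h.rel4]
        exact Submodule.neg_mem _ (Submodule.subset_span ⟨_, _, rfl⟩)
      | zero => simp
      | add y z hy hz py pz => rw [lie_add]; exact Submodule.add_mem _ py pz
      | smul c y hy py => rw [lie_smul]; exact Submodule.smul_mem _ _ py
    | zero => intro y hy; simp
    | add x z hx hz px pz =>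
      intro y hy; rw [add_lie]; exact Submodule.add_mem _ (px y hy) (pz y hy)
    | smul c x hx px =>
      intro y hy; rw [smul_lie]; exact Submodule.smul_mem _ _ (px y hy)
  let S : LieSubalgebra K T :=
    { Submodule.span K s with lie_mem' := fun hx hy => hlie _ hx _ hy }
  have hmemS : ∀ a b, t a b ∈ S := fun a b => Submodule.subset_span ⟨a, b, rfl⟩
  let f : A →ₗ[K] B →ₗ[K] ↥S := LinearMap.mk₂ K
    (fun a b => ⟨t a b, hmemS a b⟩)
    (fun a a' b => Subtype.ext (by simp [SetLike.val_smul]; try rfl))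
    (fun c a b => Subtype.ext (by simp [SetLike.val_smul]; try rfl))
    (fun a b b' => Subtype.ext (by simp [SetLike.val_smul]; try rfl))
    (fun c a b => Subtype.ext (by simp [SetLike.val_smul]; try rfl))
  have hf : ∀ a b, (f a b : T) = t a b := fun a b => rfl
  obtain ⟨φ, hφ, -⟩ := h.lift ↥S f
    (fun a a' b => Subtype.ext (by
      simp only [LinearMap.mk₂_apply, f, AddSubgroupClass.coe_sub]
      exact h.rel3a a a' b))
    (fun a b b' => Subtype.ext (by
      simp only [LinearMap.mk₂_apply, f, AddSubgroupClass.coe_sub]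
      exact h.rel3b a b b'))
    (fun a b a' b' => Subtype.ext (by
      simp only [LinearMap.mk₂_apply, f, LieSubalgebra.coe_bracket, NegMemClass.coe_neg]
      exact h.rel4 a b a' b'))
  obtain ⟨ψ, hψ, huniq⟩ := h.lift T t h.rel3a h.rel3b h.rel4
  have h1 : S.incl.comp φ = ψ := huniq _ (fun a b => by
    simp [LieHom.comp_apply, hφ, LieSubalgebra.coe_incl, hf])
  have h2 : (LieHom.id : T →ₗ⁅K⁆ T) = ψ := huniq _ (fun a b => rfl)
  have hid : ∀ x : T, ((φ x : ↥S) : T) = x := by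
    intro x
    have := congrArg (fun g : T →ₗ⁅K⁆ T => g x) (h1.trans h2.symm)
    simpa using this
  rw [eq_top_iff]
  intro x _
  exact hid x ▸ (φ x).2

end SpanTop

theorem compatible_central_extension (K : Type u) [CommRing K] (M N : Type u) [LieRing M] [LieAlgebra K M]
    [LieRing N] [LieAlgebra K N] (d : M →ₗ⁅K⁆ N) (act : N →ₗ[K] M →ₗ[K] M)
    (br : N →ₗ[K] N →ₗ[K] M) (hX : LieXMod K M N d act)
    (hB : LieBraiding K M N d act br)
    (TM : Type u) [LieRing TM] [LieAlgebra K TM] (tm : N →ₗ[K] M →ₗ[K] TM)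
    (hTM : IsNATensor K N M act (coAct K M N d) TM tm)
    (TN : Type u) [LieRing TN] [LieAlgebra K TN] (tn : N →ₗ[K] N →ₗ[K] TN)
    (hTN : IsNATensorSq K N TN tn)
    (D : TM →ₗ⁅K⁆ TN) (hD : ∀ (n : N) (m : M), D (tm n m) = tn n (d m))
    (A : TN →ₗ[K] TM →ₗ[K] TM)
    (hA : ∀ (n₁ n₂ n₃ : N) (m : M),
      A (tn n₁ n₂) (tm n₃ m) = tm ⁅⁅n₁, n₂⁆, n₃⁆ m + tm n₃ (act ⁅n₁, n₂⁆ m))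
    (Br : TN →ₗ[K] TN →ₗ[K] TM)
    (hBr : ∀ n₁ n₂ n₃ n₄ : N,
      Br (tn n₁ n₂) (tn n₃ n₄) = tm ⁅n₁, n₂⁆ (br n₃ n₄))
    (hBrB : LieBraiding K TM TN D A Br)
    (hperfX : LieSubalgebra.lieSpan K M {x : M | ∃ (n : N) (m : M), x = act n m} = ⊤ ∧
      LieSubalgebra.lieSpan K N {x : N | ∃ a b : N, x = ⁅a, b⁆} = ⊤)
    (c₁ : TM →ₗ⁅K⁆ M) (hc₁ : ∀ (n : N) (m : M), c₁ (tm n m) = act n m)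
    (c₂ : TN →ₗ⁅K⁆ N) (hc₂ : ∀ n n' : N, c₂ (tn n n') = ⁅n, n'⁆) :
    (∀ (x : TN) (y : TM), c₁ (A x y) = act (c₂ x) (c₁ y)) ∧
      (∀ y : TM, d (c₁ y) = c₂ (D y)) ∧
      (∀ x y : TN, c₁ (Br x y) = br (c₂ x) (c₂ y)) ∧
      Function.Surjective c₁ ∧ Function.Surjective c₂ ∧
      (∀ y : TM, c₁ y = 0 → ∀ x : TN, A x y = 0) ∧
      (∀ x : TN, c₂ x = 0 → (∀ y : TN, ⁅x, y⁆ = 0) ∧ ∀ y : TM, A x y = 0) := by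
  have sTM : Submodule.span K {x : TM | ∃ n m, x = tm n m} = ⊤ := hTM.span_top
  have sTN : Submodule.span K {x : TN | ∃ a b, x = tn a b} = ⊤ :=
    IsNATensor.span_top hTN
  -- induction principles
  have indTM : ∀ (P : TM → Prop), (∀ n m, P (tm n m)) → P 0 →
      (∀ x y, P x → P y → P (x + y)) → (∀ (c : K) (x), P x → P (c • x)) →
      ∀ x, P x := by
    intro P hmem h0 hadd hsmul x
    have hx : x ∈ Submodule.span K {x : TM | ∃ n m, x = tm n m} := by
      rw [sTM]; trivial
    induction hx using Submodule.span_induction with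
    | mem x hx => obtain ⟨n, m, rfl⟩ := hx; exact hmem n m
    | zero => exact h0
    | add a b _ _ pa pb => exact hadd a b pa pb
    | smul c a _ pa => exact hsmul c a pa
  have indTN : ∀ (P : TN → Prop), (∀ a b, P (tn a b)) → P 0 →
      (∀ x y, P x → P y → P (x + y)) → (∀ (c : K) (x), P x → P (c • x)) →
      ∀ x, P x := by
    intro P hmem h0 hadd hsmul x
    have hx : x ∈ Submodule.span K {x : TN | ∃ a b, x = tn a b} := by
      rw [sTN]; trivial
    induction hx using Submodule.span_induction with
    | mem x hx => obtain ⟨a, b, rfl⟩ := hx; exact hmem a b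
    | zero => exact h0
    | add a b _ _ pa pb => exact hadd a b pa pb
    | smul c a _ pa => exact hsmul c a pa
  -- (2) compatibility with boundary maps
  have key2 : ∀ y : TM, d (c₁ y) = c₂ (D y) := by
    refine indTM _ ?_ ?_ ?_ ?_
    · intro n m; rw [hc₁, hD, hc₂, hX.equivar]
    · simp [map_zero]
    · intro x y hx hy; simp only [map_add, map_add, hx, hy]
    · intro c x hx; simp only [map_smul, map_smul, hx]
  -- key formula for the action A in terms of c₂
  have keyA : ∀ (x : TN) (n₃ : N) (m : M),
      A x (tm n₃ m) = tm ⁅c₂ x, n₃⁆ m + tm n₃ (act (c₂ x) m) := by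
    intro x n₃ m
    refine indTN (fun x => A x (tm n₃ m) = tm ⁅c₂ x, n₃⁆ m + tm n₃ (act (c₂ x) m))
      ?_ ?_ ?_ ?_ x
    · intro n₁ n₂; rw [hA, hc₂]
    · simp [map_zero]
    · intro a b ha hb
      simp only [map_add, map_add, LinearMap.add_apply, ha, hb, add_lie]
      abel
    · intro c a ha
      simp only [map_smul, map_smul, LinearMap.smul_apply, ha, smul_lie, smul_add]
  -- key formula for Br with generator in the second slot
  have keyBr : ∀ (x : TN) (n₃ n₄ : N), Br x (tn n₃ n₄) = tm (c₂ x) (br n₃ n₄) := by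
    intro x n₃ n₄
    refine indTN (fun x => Br x (tn n₃ n₄) = tm (c₂ x) (br n₃ n₄)) ?_ ?_ ?_ ?_ x
    · intro n₁ n₂; rw [hBr, hc₂]
    · simp [map_zero]
    · intro a b ha hb
      simp only [map_add, map_add, LinearMap.add_apply, ha, hb]
    · intro c a ha
      simp only [map_smul, map_smul, LinearMap.smul_apply, ha]
  -- key formula for Br with generator in the first slot
  have keyL2 : ∀ (n₁ n₂ : N) (z : TN),
      Br (tn n₁ n₂) z = tm n₁ (br n₂ (c₂ z)) - tm n₂ (br n₁ (c₂ z)) := by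
    intro n₁ n₂ z
    refine indTN (fun z => Br (tn n₁ n₂) z
      = tm n₁ (br n₂ (c₂ z)) - tm n₂ (br n₁ (c₂ z))) ?_ ?_ ?_ ?_ z
    · intro n₃ n₄
      rw [hBr, hc₂, hTM.rel3a, ← hB.b4 n₂ (br n₃ n₄), ← hB.b4 n₁ (br n₃ n₄), hB.b1]
    · simp [map_zero]
    · intro a b ha hb
      simp only [map_add, map_add, LinearMap.add_apply, ha, hb]
      abel
    · intro c a ha
      simp only [map_smul, map_smul, LinearMap.smul_apply, ha, smul_sub]
  -- key formula for the bracket on TN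
  have keyLie : ∀ (z : TN) (n₃ n₄ : N), ⁅z, tn n₃ n₄⁆ = tn (c₂ z) ⁅n₃, n₄⁆ := by
    intro z n₃ n₄
    refine indTN (fun z => ⁅z, tn n₃ n₄⁆ = tn (c₂ z) ⁅n₃, n₄⁆) ?_ ?_ ?_ ?_ z
    · intro a b
      have h4 := hTN.rel4 a b n₃ n₄
      simp only [bracketMap, LinearMap.mk₂_apply] at h4
      rw [h4, hc₂, ← lie_skew a b, map_neg, LinearMap.neg_apply]
    · simp [map_zero]
    · intro a b ha hb
      simp only [add_lie, ha, hb, map_add, map_add, LinearMap.add_apply]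
    · intro c a ha
      simp only [smul_lie, ha, map_smul, map_smul, LinearMap.smul_apply]
  -- (1)
  have goal1 : ∀ (x : TN) (y : TM), c₁ (A x y) = act (c₂ x) (c₁ y) := by
    intro x y
    refine indTM (fun y => c₁ (A x y) = act (c₂ x) (c₁ y)) ?_ ?_ ?_ ?_ y
    · intro n m
      rw [keyA, map_add, hc₁, hc₁, hc₁, hX.act_lie]
      abel
    · simp [map_zero]
    · intro a b ha hb
      simp only [map_add, map_add, ha, hb]
    · intro c a ha
      simp only [map_smul, map_smul, ha]
  -- (3)
  have goal3 : ∀ x y : TN, c₁ (Br x y) = br (c₂ x) (c₂ y) := by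
    intro x y
    refine indTN (fun y => c₁ (Br x y) = br (c₂ x) (c₂ y)) ?_ ?_ ?_ ?_ y
    · intro n₃ n₄
      rw [keyBr, hc₁, hc₂, ← hB.b4, hB.b1]
    · simp [map_zero]
    · intro a b ha hb
      simp only [map_add, map_add, ha, hb]
    · intro c a ha
      simp only [map_smul, map_smul, ha]
  -- surjectivity
  have hsurj1 : Function.Surjective c₁ := by
    intro m
    have hle : LieSubalgebra.lieSpan K M {x : M | ∃ (n : N) (m : M), x = act n m}
        ≤ c₁.range := by
      rw [LieSubalgebra.lieSpan_le]
      rintro x ⟨n, m', rfl⟩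
      exact ⟨tm n m', hc₁ n m'⟩
    have : m ∈ c₁.range := hle (by rw [hperfX.1]; trivial)
    exact (c₁.mem_range m).mp this
  have hsurj2 : Function.Surjective c₂ := by
    intro n
    have hle : LieSubalgebra.lieSpan K N {x : N | ∃ a b : N, x = ⁅a, b⁆}
        ≤ c₂.range := by
      rw [LieSubalgebra.lieSpan_le]
      rintro x ⟨a, b, rfl⟩
      exact ⟨tn a b, hc₂ a b⟩
    have : n ∈ c₂.range := hle (by rw [hperfX.2]; trivial)
    exact (c₂.mem_range n).mp this
  -- (6) centrality w.r.t. the action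
  have goal6 : ∀ y : TM, c₁ y = 0 → ∀ x : TN, A x y = 0 := by
    intro y hy x
    have hD0 : c₂ (D y) = 0 := by rw [← key2, hy, map_zero]
    have hAB : A x y = Br x (D y) := (hBrB.b4 x y).symm
    rw [hAB]
    refine indTN (fun x => Br x (D y) = 0) ?_ ?_ ?_ ?_ x
    · intro n₁ n₂; rw [keyL2, hD0]; simp
    · simp
    · intro a b ha hb; simp only [map_add, LinearMap.add_apply, ha, hb, add_zero]
    · intro c a ha; simp only [map_smul, LinearMap.smul_apply, ha, smul_zero]
  -- (7) centrality
  have goal7 : ∀ x : TN, c₂ x = 0 → (∀ y : TN, ⁅x, y⁆ = 0) ∧ ∀ y : TM, A x y = 0 := by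
    intro x hx
    constructor
    · intro y
      refine indTN (fun y => ⁅x, y⁆ = 0) ?_ ?_ ?_ ?_ y
      · intro n₃ n₄; rw [keyLie, hx]; simp
      · simp
      · intro a b ha hb; rw [lie_add, ha, hb, add_zero]
      · intro c a ha; rw [lie_smul, ha, smul_zero]
    · intro y
      refine indTM (fun y => A x y = 0) ?_ ?_ ?_ ?_ y
      · intro n m; rw [keyA, hx]; simp
      · simp
      · intro a b ha hb; rw [map_add, ha, hb, add_zero]
      · intro c a ha; rw [map_smul, ha, smul_zero]
  exact ⟨goal1, key2, goal3, hsurj1, hsurj2, goal6, goal7⟩
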